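/- arXiv:1910.01404 — 15 statements merged into one kernel-verified Lean document; each statement's English description precedes it below -/
import Mathlib

section
/- In any involutive FL_e-algebra with t ≥ f, the inequality x * y ≤ (x' * y')' holds for all x, y. -/
/-- In any involutive FL_e-algebra with t ≥ f, one has x * y ≤ (x' * y')'. -/
theorem stmt2 {X : Type*} [Lattice X] (mul res : X → X → X) (t f : X)
    (hcomm : ∀ x y : X, mul x y = mul y x)
    (hassoc : ∀ x y z : X, mul (mul x y) z = mul x (mul y z))
    (hone : ∀ x : X, mul t x = x)
    (hadj : ∀ x y z : X, mul x y ≤ z ↔ y ≤ res x z)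
    (hinv : ∀ x : X, res (res x f) f = x)
    (htf : f ≤ t) :
    ∀ x y : X, mul x y ≤ res (mul (res x f) (res y f)) f := by
  intro x y
  have monoR : ∀ a b c : X, a ≤ b → mul c a ≤ mul c b := fun a b c h =>
    (hadj c a (mul c b)).mpr (h.trans ((hadj c b (mul c b)).mp le_rfl))
  have mono : ∀ a b c d : X, a ≤ b → c ≤ d → mul a c ≤ mul b d := by
    intro a b c d hab hcd
    calc mul a c ≤ mul a d := monoR _ _ _ hcd
      _ = mul d a := hcomm _ _
      _ ≤ mul d b := monoR _ _ _ hab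
      _ = mul b d := hcomm _ _
  have h1 : ∀ a : X, mul a (res a f) ≤ f := fun a => (hadj a (res a f) f).mpr le_rfl
  rw [← hadj]
  have key : mul (mul (res x f) (res y f)) (mul x y)
      = mul (mul x (res x f)) (mul y (res y f)) := by
    calc mul (mul (res x f) (res y f)) (mul x y)
        = mul (res x f) (mul (res y f) (mul x y)) := hassoc _ _ _
      _ = mul (res x f) (mul (mul (res y f) x) y) := by rw [hassoc]
      _ = mul (res x f) (mul (mul x (res y f)) y) := by rw [hcomm (res y f) x]
      _ = mul (res x f) (mul x (mul (res y f) y)) := by rw [hassoc]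
      _ = mul (mul (res x f) x) (mul (res y f) y) := (hassoc _ _ _).symm
      _ = mul (mul x (res x f)) (mul y (res y f)) := by
          rw [hcomm (res x f) x, hcomm (res y f) y]
  rw [key]
  calc mul (mul x (res x f)) (mul y (res y f)) ≤ mul f f := mono _ _ _ _ (h1 x) (h1 y)
    _ ≤ mul t f := mono _ _ _ _ htf le_rfl
    _ = f := hone f
end

section
/- In any involutive FL_e-algebra, defining τ(x) = x→x, one has x * τ(x) = x and τ(x) ≥ t for every x. -/
/-- In any involutive FL_e-algebra, with τ(x) = x→x, one has x * τ(x) = x and τ(x) ≥ t. -/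
theorem stmt3 {X : Type*} [Lattice X] (mul res : X → X → X) (t f : X)
    (hcomm : ∀ x y : X, mul x y = mul y x)
    (hassoc : ∀ x y z : X, mul (mul x y) z = mul x (mul y z))
    (hone : ∀ x : X, mul t x = x)
    (hadj : ∀ x y z : X, mul x y ≤ z ↔ y ≤ res x z)
    (hinv : ∀ x : X, res (res x f) f = x) :
    ∀ x : X, mul x (res x x) = x ∧ t ≤ res x x := by
  intro x
  have ht : t ≤ res x x := (hadj x t x).mp (by rw [hcomm, hone])
  refine ⟨le_antisymm ((hadj x (res x x) x).mpr le_rfl) ?_, ht⟩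
  have : mul x t ≤ mul x (res x x) := by
    exact (hadj x t (mul x (res x x))).mpr (le_trans ht ((hadj x (res x x) (mul x (res x x))).mp le_rfl))
  rwa [hcomm, hone] at this
end

section
/- In any involutive FL_e-algebra, an element u with u ≥ t is idempotent (u * u = u) if and only if τ(u) = u, where τ(x) = x→x. -/
/-- In any involutive FL_e-algebra, u ≥ t is idempotent iff τ(u) = u, where τ(x) = x→x. -/
theorem stmt4 {X : Type*} [Lattice X] (mul res : X → X → X) (t f : X)
    (hcomm : ∀ x y : X, mul x y = mul y x)
    (hassoc : ∀ x y z : X, mul (mul x y) z = mul x (mul y z))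
    (hone : ∀ x : X, mul t x = x)
    (hadj : ∀ x y z : X, mul x y ≤ z ↔ y ≤ res x z)
    (hinv : ∀ x : X, res (res x f) f = x) :
    ∀ u : X, t ≤ u → (mul u u = u ↔ res u u = u) := by
  -- monotonicity of mul in the second argument
  have mono : ∀ a x y : X, x ≤ y → mul a x ≤ mul a y := by
    intro a x y hxy
    have : y ≤ res a (mul a y) := (hadj a y (mul a y)).mp le_rfl
    exact (hadj a x (mul a y)).mpr (le_trans hxy this)
  intro u htu
  constructor
  · intro hid
    apply le_antisymm
    · -- res u u ≤ u
      have h1 : res u u = mul t (res u u) := (hone _).symm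
      have h2 : mul t (res u u) ≤ mul u (res u u) := by
        calc mul t (res u u) = mul (res u u) t := hcomm _ _
          _ ≤ mul (res u u) u := mono (res u u) t u htu
          _ = mul u (res u u) := hcomm _ _
      have h3 : mul u (res u u) ≤ u := (hadj u (res u u) u).mpr le_rfl
      calc res u u = mul t (res u u) := h1
        _ ≤ mul u (res u u) := h2
        _ ≤ u := h3
    · exact (hadj u u u).mp (le_of_eq hid)
  · intro htau
    apply le_antisymm
    · exact (hadj u u u).mpr (le_of_eq htau.symm)
    · calc u = mul t u := (hone u).symm
        _ = mul u t := hcomm t u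
        _ ≤ mul u u := mono u t u htu
end

section
/- In any involutive FL_e-algebra, the range of τ (where τ(x) = x→x) equals the set of positive idempotent elements, i.e. {τ(x) : x ∈ X} = {u : u ≥ t and u * u = u}. -/
/-- In any involutive FL_e-algebra, the range of τ equals the set of positive
idempotent elements. -/
theorem stmt5 {X : Type*} [Lattice X] (mul res : X → X → X) (t f : X)
    (hcomm : ∀ x y : X, mul x y = mul y x)
    (hassoc : ∀ x y z : X, mul (mul x y) z = mul x (mul y z))
    (hone : ∀ x : X, mul t x = x)
    (hadj : ∀ x y z : X, mul x y ≤ z ↔ y ≤ res x z)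
    (hinv : ∀ x : X, res (res x f) f = x) :
    {u : X | ∃ x : X, res x x = u} = {u : X | t ≤ u ∧ mul u u = u} := by
  have mono : ∀ a b c : X, a ≤ b → mul c a ≤ mul c b := fun a b c h =>
    (hadj c a (mul c b)).mpr (h.trans ((hadj c b (mul c b)).mp le_rfl))
  have resres : ∀ a b c : X, res a (res b c) = res (mul b a) c := by
    intro a b c
    apply le_antisymm
    · rw [← hadj, hassoc, hadj, hadj]
    · rw [← hadj, ← hadj, ← hassoc, hadj]
  ext u
  simp only [Set.mem_setOf_eq]
  constructor
  · rintro ⟨x, rfl⟩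
    have hpos : t ≤ res x x := (hadj x t x).mp (by rw [hcomm, hone])
    refine ⟨hpos, le_antisymm ?_ ?_⟩
    · have h1 : mul x (res x x) ≤ x := (hadj x (res x x) x).mpr le_rfl
      rw [← hadj, ← hassoc]
      calc mul (mul x (res x x)) (res x x)
          = mul (res x x) (mul x (res x x)) := hcomm _ _
        _ ≤ mul (res x x) x := mono _ _ _ h1
        _ = mul x (res x x) := hcomm _ _
        _ ≤ x := h1
    · calc res x x = mul t (res x x) := (hone _).symm
        _ ≤ mul (res x x) (res x x) := by
            have h := mono t (res x x) (res x x) hpos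
            rwa [hcomm (res x x) t] at h
  · rintro ⟨hpos, hid⟩
    refine ⟨res u f, ?_⟩
    rw [resres]
    have h1 : mul u (res u f) = res u f := by
      apply le_antisymm
      · rw [hadj, resres, hid]
      · calc res u f = mul t (res u f) := (hone _).symm
          _ ≤ mul u (res u f) := by
              have h := mono t u (res u f) hpos
              rwa [hcomm (res u f) t, hcomm (res u f) u] at h
    rw [h1, hinv]
end

section
/- In any involutive FL_e-algebra, τ(τ(x)) = τ(x) for all x, where τ(x) = x→x. -/
/-- In any involutive FL_e-algebra, τ(τ(x)) = τ(x), where τ(x) = x→x. -/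
theorem stmt6 {X : Type*} [Lattice X] (mul res : X → X → X) (t f : X)
    (hcomm : ∀ x y : X, mul x y = mul y x)
    (hassoc : ∀ x y z : X, mul (mul x y) z = mul x (mul y z))
    (hone : ∀ x : X, mul t x = x)
    (hadj : ∀ x y z : X, mul x y ≤ z ↔ y ≤ res x z)
    (hinv : ∀ x : X, res (res x f) f = x) :
    ∀ x : X, res (res x x) (res x x) = res x x := by
  intro x
  set T := res x x with hT
  have hmono : ∀ a b y : X, a ≤ b → mul a y ≤ mul b y := by
    intro a b y h
    rw [hcomm a y]
    exact (hadj y a (mul b y)).mpr (le_trans h ((hadj y b (mul b y)).mp (le_of_eq (hcomm y b))))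
  have htle : t ≤ T := (hadj x t x).mp (by rw [hcomm, hone])
  have hTx : mul x T ≤ x := (hadj x T x).mpr le_rfl
  -- mul T T ≤ T
  have h2 : mul T T ≤ T := by
    refine (hadj x (mul T T) x).mp ?_
    have : mul x (mul T T) = mul (mul x T) T := (hassoc x T T).symm
    rw [this]
    exact le_trans (hmono (mul x T) x T hTx) hTx
  apply le_antisymm
  · -- res T T ≤ T
    have h3 : mul T (res T T) ≤ T := (hadj T (res T T) T).mpr le_rfl
    have h4 : mul t (res T T) ≤ mul T (res T T) := hmono t T (res T T) htle
    calc res T T = mul t (res T T) := (hone _).symm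
      _ ≤ mul T (res T T) := h4
      _ ≤ T := h3
  · exact (hadj T T T).mp h2
end

section
/- In any involutive FL_e-algebra whose monoid operation * is cancellative, x * x' = f for every x, where x' = x→f. -/
/-- In any involutive FL_e-algebra with cancellative monoid operation, x * x' = f. -/
theorem stmt8 {X : Type*} [Lattice X] (mul res : X → X → X) (t f : X)
    (hcomm : ∀ x y : X, mul x y = mul y x)
    (hassoc : ∀ x y z : X, mul (mul x y) z = mul x (mul y z))
    (hone : ∀ x : X, mul t x = x)
    (hadj : ∀ x y z : X, mul x y ≤ z ↔ y ≤ res x z)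
    (hinv : ∀ x : X, res (res x f) f = x)
    (hcanc : ∀ x y z : X, mul x z = mul y z → x = y) :
    ∀ x : X, mul x (res x f) = f := by
  have hone' : ∀ x : X, mul x t = x := fun x => (hcomm x t).trans (hone x)
  have mono : ∀ a b c : X, b ≤ c → mul a b ≤ mul a c := by
    intro a b c h
    exact (hadj a b (mul a c)).mpr (le_trans h ((hadj a c (mul a c)).mp le_rfl))
  have resxx : ∀ x : X, res x x = t := by
    intro x
    have h1 : mul x (res x x) ≤ x := (hadj x (res x x) x).mpr le_rfl
    have h2 : t ≤ res x x := (hadj x t x).mp (le_of_eq (hone' x))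
    have h3 : x ≤ mul x (res x x) := by
      calc x = mul x t := (hone' x).symm
        _ ≤ mul x (res x x) := mono x t (res x x) h2
    apply hcanc (res x x) t x
    rw [hcomm (res x x) x, hcomm t x, hone' x]
    exact le_antisymm h1 h3
  have curry : ∀ x y z : X, res (mul x y) z = res y (res x z) := by
    intro x y z
    apply le_antisymm
    · apply (hadj y _ _).mp
      apply (hadj x _ _).mp
      rw [← hassoc]
      exact (hadj (mul x y) _ z).mpr le_rfl
    · apply (hadj (mul x y) _ _).mp
      rw [hassoc]
      exact (hadj x _ z).mpr ((hadj y _ _).mpr le_rfl)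
  have restf : res t f = f := by
    apply le_antisymm
    · have := (hadj t (res t f) f).mpr le_rfl
      rwa [hone] at this
    · exact (hadj t f f).mp (le_of_eq (hone f))
  intro x
  have key : res (mul x (res x f)) f = t := by
    rw [curry, resxx]
  calc mul x (res x f) = res (res (mul x (res x f)) f) f := (hinv _).symm
    _ = res t f := by rw [key]
    _ = f := restf
end

section
/- An odd involutive FL_e-algebra (one where t' = t, i.e. t→f = t equivalently f = t) has a lattice-ordered abelian group reduct—every element is invertible with inverse x' = x→t—if and only if its monoid operation is cancellative. -/
/-- An odd involutive FL_e-algebra has a lattice-ordered abelian group reduct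
(every element invertible with inverse x→t) iff its monoid operation is cancellative. -/
theorem stmt9 {X : Type*} [Lattice X] (mul res : X → X → X) (t f : X)
    (hcomm : ∀ x y : X, mul x y = mul y x)
    (hassoc : ∀ x y z : X, mul (mul x y) z = mul x (mul y z))
    (hone : ∀ x : X, mul t x = x)
    (hadj : ∀ x y z : X, mul x y ≤ z ↔ y ≤ res x z)
    (hinv : ∀ x : X, res (res x f) f = x)
    (hodd : res t f = t) :
    (∀ x : X, mul x (res x t) = t) ↔ (∀ x y z : X, mul x z = mul y z → x = y) := by
  -- res t z = z for all z
  have hrest : ∀ z : X, res t z = z := by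
    intro z
    apply le_antisymm
    · have := (hadj t (res t z) z).mpr le_rfl
      rwa [hone] at this
    · exact (hadj t z z).mp (by rw [hone])
  -- f = t
  have hft : f = t := by rw [← hrest f, hodd]
  constructor
  · intro hx x y z h
    calc x = mul t x := (hone x).symm
      _ = mul (mul z (res z t)) x := by rw [hx z]
      _ = mul (res z t) (mul x z) := by
          rw [hcomm z (res z t), hassoc, hcomm z x]
      _ = mul (res z t) (mul y z) := by rw [h]
      _ = mul (mul z (res z t)) y := by
          rw [hcomm z (res z t), hassoc, hcomm z y]
      _ = mul t y := by rw [hx z]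
      _ = y := hone y
  · intro hcancel x
    -- monotonicity
    have hmono : ∀ a b c : X, b ≤ c → mul a b ≤ mul a c := by
      intro a b c hbc
      have h1 : c ≤ res a (mul a c) := (hadj a c (mul a c)).mp le_rfl
      exact (hadj a b (mul a c)).mpr (le_trans hbc h1)
    -- res x (mul x y) = y via cancellation
    have hres : ∀ a b : X, res a (mul a b) = b := by
      intro a b
      have h1 : b ≤ res a (mul a b) := (hadj a b (mul a b)).mp le_rfl
      have h2 : mul a (res a (mul a b)) ≤ mul a b :=
        (hadj a (res a (mul a b)) (mul a b)).mpr le_rfl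
      have h3 : mul a b ≤ mul a (res a (mul a b)) := hmono a b _ h1
      have h4 : mul (res a (mul a b)) a = mul b a := by
        rw [hcomm _ a, hcomm b a]; exact le_antisymm h2 h3
      exact hcancel _ _ _ h4
    -- res x x = t
    have hresxx : ∀ a : X, res a a = t := by
      intro a
      have := hres a t
      rwa [hcomm a t, hone] at this
    -- mul x (res x t) ≤ t
    have hle : mul x (res x t) ≤ t := (hadj x (res x t) t).mpr le_rfl
    -- the other direction: (mul x (res x t))' = res x (res x t)' ... compute
    -- res (mul x x') f = res x' (res x f) where x' = res x f = res x t (f = t)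
    have hcurry : ∀ a b c : X, res (mul a b) c = res b (res a c) := by
      intro a b c
      apply le_antisymm
      · have h1 : mul (mul a b) (res (mul a b) c) ≤ c :=
          (hadj (mul a b) _ c).mpr le_rfl
        rw [hassoc] at h1
        have h2 : mul b (res (mul a b) c) ≤ res a c := (hadj a _ _).mp h1
        exact (hadj b _ _).mp h2
      · have h1 : mul b (res b (res a c)) ≤ res a c :=
          (hadj b _ _).mpr le_rfl
        have h2 : mul a (mul b (res b (res a c))) ≤ c := (hadj a _ _).mpr h1
        rw [← hassoc] at h2
        exact (hadj (mul a b) _ _).mp h2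
    -- key: res (mul x (res x t)) t = t
    have hkey : res (mul x (res x t)) f = t := by
      rw [hcurry, hft]
      -- res (res x t) (res x t) = t
      exact hresxx (res x t)
    -- apply involution
    have := hinv (mul x (res x t))
    rw [hkey, hodd] at this
    exact this.symm
end

section
/- In an odd involutive FL_e-chain, the set X_t = {x : x→x = t} consists exactly of the invertible elements of X, and on X_t the residual complement x' = x→f acts as group inverse, so X_t forms a totally ordered abelian group under *. -/
/-- In an odd involutive FL_e-chain, X_t = {x : x→x = t} is exactly the set of
invertible elements, the residual complement x→f acts there as group inverse,
and X_t is closed under the product (hence a totally ordered abelian group). -/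
theorem stmt11 {X : Type*} [LinearOrder X] (mul res : X → X → X) (t f : X)
    (hcomm : ∀ x y : X, mul x y = mul y x)
    (hassoc : ∀ x y z : X, mul (mul x y) z = mul x (mul y z))
    (hone : ∀ x : X, mul t x = x)
    (hadj : ∀ x y z : X, mul x y ≤ z ↔ y ≤ res x z)
    (hinv : ∀ x : X, res (res x f) f = x)
    (hodd : res t f = t) :
    (∀ x : X, res x x = t ↔ ∃ y : X, mul x y = t) ∧
    (∀ x : X, res x x = t → mul x (res x f) = t) ∧
    (∀ x y : X, res x x = t → res y y = t → res (mul x y) (mul x y) = t) := by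
  -- f = t
  have hft : f = t := by
    have h1 : f ≤ res t f := (hadj t f f).mp (by rw [hone])
    have h2 : res t f ≤ f := by
      have := (hadj t (res t f) f).mpr le_rfl
      rwa [hone] at this
    have : f = res t f := le_antisymm h1 h2
    rw [this, hodd]
  -- t ≤ res x x always
  have htle : ∀ x : X, t ≤ res x x := fun x =>
    (hadj x t x).mp (by rw [hcomm, hone])
  -- invertible → res x x = t
  have hback : ∀ x y : X, mul x y = t → res x x = t := by
    intro x y hxy
    refine le_antisymm ?_ (htle x)
    have h1 : mul x (res x x) ≤ x := by
      have := (hadj x (res x x) x).mpr le_rfl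
      exact this
    -- multiply by y
    have h2 : mul y (mul x (res x x)) ≤ mul y x := by
      have h3 : x ≤ res y (mul y x) := (hadj y x (mul y x)).mp le_rfl
      exact (hadj y (mul x (res x x)) (mul y x)).mpr (le_trans ((hadj x (res x x) x).mpr le_rfl) h3)
    rw [← hassoc, hcomm y x, hxy, hone] at h2
    exact h2
  -- res x x = t → x * (res x f) = t
  have hmain : ∀ x : X, res x x = t → mul x (res x f) = t := by
    intro x hx
    set x' := res x f with hx'
    -- res x' x' = t
    have hx'x' : res x' x' = t := by
      refine le_antisymm ?_ (htle x')
      set r := res x' x' with hr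
      have h1 : mul x' r ≤ x' := (hadj x' r x').mpr le_rfl
      have h2 : mul x (mul x' r) ≤ f := (hadj x (mul x' r) f).mpr h1
      have h3 : mul x' (mul x r) ≤ f := by
        rw [← hassoc, hcomm x' x, hassoc]; exact h2
      have h4 : mul x r ≤ res x' f := (hadj x' (mul x r) f).mp h3
      rw [hx', hinv] at h4
      have h5 : r ≤ res x x := (hadj x r x).mp h4
      rwa [hx] at h5
    -- res (mul x x') f = res x' (res x f) = res x' x' = t
    have hcur : res (mul x x') f = t := by
      refine le_antisymm ?_ ?_
      · have h1 : mul (mul x x') (res (mul x x') f) ≤ f :=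
          (hadj (mul x x') (res (mul x x') f) f).mpr le_rfl
        have h2 : mul x' (mul x (res (mul x x') f)) ≤ f := by
          rw [← hassoc, hcomm x' x]; exact h1
        have h3 : mul x (res (mul x x') f) ≤ res x' f := (hadj x' _ f).mp h2
        have h4 : res (mul x x') f ≤ res x (res x' f) := (hadj x _ _).mp h3
        have h5 : res x (res x' f) ≤ t := by
          rw [hx', hinv, hx]
        exact le_trans h4 h5
      · -- t ≤ res (mul x x') f : mul (mul x x') t = mul x x' ≤ f? need mul x x' ≤ f = t
        have h1 : mul x x' ≤ f := (hadj x x' f).mpr le_rfl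
        have h2 : mul (mul x x') t ≤ f := by rw [hcomm, hone]; exact h1
        exact (hadj (mul x x') t f).mp h2
    have := hinv (mul x x')
    rw [hcur, hodd] at this
    exact this.symm
  refine ⟨?_, hmain, ?_⟩
  · intro x
    constructor
    · intro hx; exact ⟨res x f, hmain x hx⟩
    · rintro ⟨y, hy⟩; exact hback x y hy
  · intro x y hx hy
    have hxx' := hmain x hx
    have hyy' := hmain y hy
    set x' := res x f
    set y' := res y f
    apply hback (mul x y) (mul x' y')
    calc mul (mul x y) (mul x' y')
        = mul x (mul y (mul x' y')) := hassoc ..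
      _ = mul x (mul (mul y x') y') := by rw [hassoc]
      _ = mul x (mul (mul x' y) y') := by rw [hcomm y x']
      _ = mul x (mul x' (mul y y')) := by rw [hassoc]
      _ = mul x (mul x' t) := by rw [hyy']
      _ = mul x x' := by rw [hcomm x' t, hone]
      _ = t := hxx'
end

section
/- Let X be an odd or even involutive FL_e-chain that is cancellative and discretely ordered (every element has a unique predecessor and successor, distinct from itself). Then for every z, z * t↓ = z↓, where t↓ denotes the predecessor of the unit t and z↓ the predecessor of z. -/
/-- In an odd or even, cancellative, discretely ordered involutive FL_e-chain,
z * t↓ = z↓ for every z. -/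
theorem stmt12 {X : Type*} [LinearOrder X] (mul res : X → X → X) (t f : X)
    (hcomm : ∀ x y : X, mul x y = mul y x)
    (hassoc : ∀ x y z : X, mul (mul x y) z = mul x (mul y z))
    (hone : ∀ x : X, mul t x = x)
    (hadj : ∀ x y z : X, mul x y ≤ z ↔ y ≤ res x z)
    (hinv : ∀ x : X, res (res x f) f = x)
    (hoddeven : res t f = t ∨ (res t f < t ∧ ∀ w : X, res t f < w → t ≤ w))
    (hcanc : ∀ x y z : X, mul x z = mul y z → x = y)
    (hdiscrete : ∀ x : X, (∃ y, y < x ∧ ∀ z, z < x → z ≤ y) ∧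
                          (∃ y, x < y ∧ ∀ z, x < z → y ≤ z)) :
    ∀ z td zd : X,
      (td < t ∧ ∀ w, w < t → w ≤ td) →
      (zd < z ∧ ∀ w, w < z → w ≤ zd) →
      mul z td = zd := by
  intro z td zd htd hzd
  obtain ⟨htd1, htd2⟩ := htd
  obtain ⟨hzd1, hzd2⟩ := hzd
  have hone' : ∀ x, mul x t = x := fun x => (hcomm x t).trans (hone x)
  -- monotonicity in the second argument
  have mono2 : ∀ c a b : X, a ≤ b → mul c a ≤ mul c b := by
    intro c a b hab
    have h2 : b ≤ res c (mul c b) := (hadj c b (mul c b)).mp le_rfl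
    exact (hadj c a (mul c b)).mpr (le_trans hab h2)
  -- monotonicity in the first argument
  have mono1 : ∀ a b c : X, a ≤ b → mul a c ≤ mul b c := by
    intro a b c h; rw [hcomm a c, hcomm b c]; exact mono2 c a b h
  -- strict monotonicity
  have smono1 : ∀ a b c : X, a < b → mul a c < mul b c := by
    intro a b c h
    rcases lt_or_eq_of_le (mono1 a b c h.le) with h' | h'
    · exact h'
    · exact absurd (hcanc a b c h') (ne_of_lt h)
  have smono2 : ∀ c a b : X, a < b → mul c a < mul c b := by
    intro c a b h; rw [hcomm c a, hcomm c b]; exact smono1 a b c h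
  -- order reflection
  have reflect_lt : ∀ a b c : X, mul a c < mul b c → a < b := by
    intro a b c h
    by_contra hc
    exact absurd h (not_lt.mpr (mono1 b a c (not_lt.mp hc)))
  -- a useful rearrangement
  have swap : ∀ a b c : X, mul (mul a b) c = mul (mul a c) b := by
    intro a b c
    rw [hassoc, hassoc, hcomm b c]
  -- res t f = f
  have hft : res t f = f := by
    apply le_antisymm
    · have h := (hadj t (res t f) f).mpr le_rfl
      rwa [hone] at h
    · exact (hadj t f f).mp (by rw [hone])
  -- successor of t
  obtain ⟨tu, htu1, htu2⟩ := (hdiscrete t).2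
  -- any element strictly above td is at least t
  have hsucc_td : ∀ w, td < w → t ≤ w := by
    intro w hw
    by_contra hc
    exact absurd (htd2 w (not_le.mp hc)) (not_le.mpr hw)
  -- td * tu = t
  have htdtu : mul td tu = t := by
    apply le_antisymm
    · by_contra hc
      have h1 : mul td tu < mul t tu := smono1 td t tu htd1
      rw [hone] at h1
      exact absurd (htu2 _ (not_le.mp hc)) (not_le.mpr h1)
    · apply hsucc_td
      have h1 : mul td t < mul td tu := smono2 td t tu htu1
      rwa [hone'] at h1
  -- f = t (odd) or f = td (even)
  have hcases : f = t ∨ f = td := by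
    rcases hoddeven with hodd | ⟨heven1, heven2⟩
    · left; rw [← hft, hodd]
    · right
      rw [hft] at heven1
      apply le_antisymm (htd2 f heven1)
      by_contra hc
      have h1 : t ≤ td := heven2 td (by rwa [hft, ← not_le])
      exact absurd h1 (not_le.mpr htd1)
  -- key lemma: x * (res x f) = f
  have key : ∀ x : X, mul x (res x f) = f := by
    intro x
    have hle : mul x (res x f) ≤ f := (hadj x (res x f) f).mpr le_rfl
    rcases lt_or_eq_of_le hle with hlt | heq
    · exfalso
      -- show mul (mul x (res x f)) tu ≤ f
      have hstep : mul (mul x (res x f)) tu ≤ f := by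
        rcases hcases with hf | hf
        · -- odd: f = t
          have h1 : mul x (res x f) ≤ td := htd2 _ (hlt.trans_le (le_of_eq hf))
          have h2 : mul (mul x (res x f)) tu ≤ mul td tu := mono1 _ _ _ h1
          rw [htdtu, ← hf] at h2
          exact h2
        · -- even: f = td
          have h1 : mul (mul x (res x f)) tu < mul td tu :=
            smono1 _ _ _ (hlt.trans_le (le_of_eq hf))
          rw [htdtu] at h1
          have h2 := htd2 _ h1
          rwa [← hf] at h2
      rw [hassoc] at hstep
      have h3 : mul (res x f) tu ≤ res x f := (hadj x _ f).mp hstep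
      have h4 : mul (res x f) tu ≤ mul (res x f) t := by rwa [hone']
      rw [hcomm (res x f) tu, hcomm (res x f) t] at h4
      have h5 : ¬ (mul t (res x f) < mul tu (res x f)) := not_lt.mpr h4
      exact h5 (smono1 t tu (res x f) htu1)
    · exact heq
  -- mul z td ≤ zd
  have hle : mul z td ≤ zd := by
    apply hzd2
    have h1 : mul td z < mul t z := smono1 td t z htd1
    rw [hone] at h1
    rwa [hcomm td z] at h1
  rcases lt_or_eq_of_le hle with hlt | heq
  · exfalso
    set y' := res zd f with hy'
    have hy : mul zd y' = f := key zd
    -- f < mul z y'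
    have hw1 : f < mul z y' := by
      have := smono1 zd z y' hzd1
      rwa [hy] at this
    -- mul (mul z y') td < f
    have hw2 : mul (mul z y') td < f := by
      have h1 : mul (mul z td) y' < mul zd y' := smono1 _ _ _ hlt
      rw [hy, swap] at h1
      exact h1
    rcases hcases with hf | hf
    · -- odd: f = t, so mul z y' ≥ tu, but also mul z y' < tu
      have h1 : tu ≤ mul z y' := htu2 _ (lt_of_le_of_lt (le_of_eq hf.symm) hw1)
      have h2 : mul (mul z y') td < mul tu td := by
        rw [hcomm tu td, htdtu, ← hf]
        exact hw2
      have h3 : mul z y' < tu := reflect_lt _ _ _ h2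
      exact absurd h1 (not_le.mpr h3)
    · -- even: f < mul z y' < t contradicts evenness
      have h1 : mul (mul z y') f < mul t f := by
        rw [hone]
        calc mul (mul z y') f = mul (mul z y') td := by rw [hf]
          _ < f := hw2
      have h2 : mul z y' < t := reflect_lt _ _ _ h1
      rcases hoddeven with hodd | ⟨_, heven2⟩
      · rw [← hft, hodd] at hf
        exact absurd (hf ▸ htd1) (lt_irrefl t)
      · have h3 := heven2 (mul z y') (by rwa [hft])
        exact absurd h3 (not_le.mpr h2)
  · exact heq
end

section
/- In an odd or even involutive FL_e-chain, the monoid operation is 'strictly increasing on the diagonal': if x₁ > x and y₁ > y then x₁ * y₁ > x * y. -/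
/-- In an odd or even involutive FL_e-chain, x₁ > x and y₁ > y imply x₁*y₁ > x*y. -/
theorem stmt13 {X : Type*} [LinearOrder X] (mul res : X → X → X) (t f : X)
    (hcomm : ∀ x y : X, mul x y = mul y x)
    (hassoc : ∀ x y z : X, mul (mul x y) z = mul x (mul y z))
    (hone : ∀ x : X, mul t x = x)
    (hadj : ∀ x y z : X, mul x y ≤ z ↔ y ≤ res x z)
    (hinv : ∀ x : X, res (res x f) f = x)
    (hoddeven : res t f = t ∨ (res t f < t ∧ ∀ w : X, res t f < w → t ≤ w)) :
    ∀ x x₁ y y₁ : X, x < x₁ → y < y₁ → mul x y < mul x₁ y₁ := by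
  -- left commutativity, useful for AC rewriting
  have hleft : ∀ a b c : X, mul a (mul b c) = mul b (mul a c) := by
    intro a b c
    rw [← hassoc, hcomm a b, hassoc]
  -- res t z = z
  have hresT : ∀ z : X, res t z = z := by
    intro z
    have h1 : res t z ≤ z := by
      have := (hadj t (res t z) z).mpr le_rfl
      rwa [hone] at this
    have h2 : z ≤ res t z := (hadj t z z).mp (le_of_eq (hone z))
    exact le_antisymm h1 h2
  -- f ≤ t
  have hft : f ≤ t := by
    rcases hoddeven with h | h
    · rw [hresT] at h; exact le_of_eq h
    · rw [hresT] at h; exact le_of_lt h.1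
  -- monotonicity in the second argument
  have hmono : ∀ c a b : X, a ≤ b → mul c a ≤ mul c b := by
    intro c a b hab
    exact (hadj c a (mul c b)).mpr (le_trans hab ((hadj c b (mul c b)).mp le_rfl))
  -- monotonicity in the first argument
  have hmono' : ∀ c a b : X, a ≤ b → mul a c ≤ mul b c := by
    intro c a b hab
    rw [hcomm a c, hcomm b c]; exact hmono c a b hab
  -- negation is antitone
  have hneg : ∀ a b : X, a ≤ b → res b f ≤ res a f := by
    intro a b hab
    refine (hadj a (res b f) f).mp ?_
    exact le_trans (hmono' (res b f) a b hab) ((hadj b (res b f) f).mpr le_rfl)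
  -- x * x' ≤ f
  have hxx' : ∀ a : X, mul a (res a f) ≤ f := by
    intro a; exact (hadj a (res a f) f).mpr le_rfl
  intro x x₁ y y₁ hx hy
  by_contra hcon
  push_neg at hcon
  -- hcon : mul x₁ y₁ ≤ mul x y
  set x' := res x f with hx'
  set y' := res y f with hy'
  -- g = x₁ * x' > f
  have hg : f < mul x₁ x' := by
    by_contra hgle
    push_neg at hgle
    have h1 : x' ≤ res x₁ f := (hadj x₁ x' f).mp hgle
    have h2 : res (res x₁ f) f ≤ res x' f := hneg x' (res x₁ f) h1
    rw [hinv, hx', hinv] at h2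
    exact absurd h2 (not_le.mpr hx)
  have hg2 : f < mul y₁ y' := by
    by_contra hgle
    push_neg at hgle
    have h1 : y' ≤ res y₁ f := (hadj y₁ y' f).mp hgle
    have h2 : res (res y₁ f) f ≤ res y' f := hneg y' (res y₁ f) h1
    rw [hinv, hy', hinv] at h2
    exact absurd h2 (not_le.mpr hy)
  -- the product (x₁*x')*(y₁*y') ≤ f
  have key : mul (mul x₁ x') (mul y₁ y') ≤ f := by
    have e1 : mul (mul x₁ x') (mul y₁ y') = mul x' (mul y' (mul x₁ y₁)) := by
      simp only [hassoc, hleft, hcomm]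
    have e2 : mul x' (mul y' (mul x y)) = mul (mul x x') (mul y y') := by
      simp only [hassoc, hleft, hcomm]
    have h1 : mul x' (mul y' (mul x₁ y₁)) ≤ mul x' (mul y' (mul x y)) :=
      hmono x' _ _ (hmono y' _ _ hcon)
    have h2 : mul (mul x x') (mul y y') ≤ mul f f :=
      le_trans (hmono (mul x x') _ _ (hxx' y)) (hmono' f _ _ (hxx' x))
    have h3 : mul f f ≤ f := by
      have := hmono' f f t hft
      rwa [hone] at this
    calc mul (mul x₁ x') (mul y₁ y') = mul x' (mul y' (mul x₁ y₁)) := e1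
      _ ≤ mul x' (mul y' (mul x y)) := h1
      _ = mul (mul x x') (mul y y') := e2
      _ ≤ mul f f := h2
      _ ≤ f := h3
  rcases hoddeven with hodd | heven
  · -- odd: f = t
    rw [hresT] at hodd
    have : mul t (mul y₁ y') ≤ mul (mul x₁ x') (mul y₁ y') := by
      apply hmono' _ t _
      rw [← hodd]; exact le_of_lt hg
    rw [hone] at this
    exact absurd (le_trans this key) (not_le.mpr hg2)
  · -- even: t covers f
    rw [hresT] at heven
    have ht1 : t ≤ mul x₁ x' := heven.2 _ hg
    have ht2 : t ≤ mul y₁ y' := heven.2 _ hg2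
    have : t ≤ mul (mul x₁ x') (mul y₁ y') := by
      calc t = mul t t := (hone t).symm
        _ ≤ mul (mul x₁ x') t := hmono' t _ _ ht1
        _ ≤ mul (mul x₁ x') (mul y₁ y') := hmono _ _ _ ht2
    exact absurd (le_trans this key) (not_le.mpr heven.1)
end

section
/- In an odd or even involutive FL_e-chain, τ(x * y) = max(τ(x), τ(y)) for all x, y, where τ(x) = x→x. -/
/-- In an odd or even involutive FL_e-chain, τ(x*y) = max(τ(x), τ(y)), τ(x) = x→x. -/
theorem stmt14 {X : Type*} [LinearOrder X] (mul res : X → X → X) (t f : X)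
    (hcomm : ∀ x y : X, mul x y = mul y x)
    (hassoc : ∀ x y z : X, mul (mul x y) z = mul x (mul y z))
    (hone : ∀ x : X, mul t x = x)
    (hadj : ∀ x y z : X, mul x y ≤ z ↔ y ≤ res x z)
    (hinv : ∀ x : X, res (res x f) f = x)
    (hoddeven : res t f = t ∨ (res t f < t ∧ ∀ w : X, res t f < w → t ≤ w)) :
    ∀ x y : X, res (mul x y) (mul x y) = max (res x x) (res y y) := by
  haveI : Std.Associative mul := ⟨hassoc⟩
  haveI : Std.Commutative mul := ⟨hcomm⟩
  intro x y
  have app : ∀ a b : X, mul a (res a b) ≤ b := fun a b => (hadj a (res a b) b).mpr le_rfl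
  have monoR : ∀ (c : X) {a b : X}, a ≤ b → mul c a ≤ mul c b := fun c a b h =>
    (hadj c a (mul c b)).mpr (h.trans ((hadj c b (mul c b)).mp le_rfl))
  have monoL : ∀ {a b : X} (c : X), a ≤ b → mul a c ≤ mul b c := by
    intro a b c h
    rw [hcomm a c, hcomm b c]; exact monoR c h
  have swap : ∀ a b : X, a ≤ res b f → b ≤ res a f := by
    intro a b h
    exact (hadj a b f).mp (by rw [hcomm]; exact (hadj b a f).mpr h)
  have resf : res t f = f := by
    refine le_antisymm ?_ ((hadj t f f).mp (le_of_eq (hone f)))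
    rw [← hone (res t f)]; exact app t f
  have hft : f ≤ t := by
    rcases hoddeven with h | h
    · rw [resf] at h; exact le_of_eq h
    · rw [resf] at h; exact h.1.le
  have cover : ∀ w : X, f < w → t ≤ w := by
    intro w hw
    rcases hoddeven with h | h
    · rw [resf] at h; rw [← h]; exact hw.le
    · exact h.2 w (by rw [resf]; exact hw)
  set u := res (mul x y) (mul x y) with hu
  have hxy : mul u (mul x y) ≤ mul x y := by rw [hcomm]; exact app _ _
  have easy1 : res x x ≤ u := by
    refine (hadj (mul x y) (res x x) (mul x y)).mp ?_
    have h : mul (mul x y) (res x x) = mul (mul x (res x x)) y := by ac_rfl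
    rw [h]; exact monoL y (app x x)
  have easy2 : res y y ≤ u := by
    refine (hadj (mul x y) (res y y) (mul x y)).mp ?_
    have h : mul (mul x y) (res y y) = mul (mul y (res y y)) x := by ac_rfl
    rw [h, hcomm x y]; exact monoL x (app y y)
  refine le_antisymm ?_ (max_le easy1 easy2)
  by_cases hc : mul u y ≤ y
  · exact le_max_of_le_right ((hadj y u y).mp (by rw [hcomm]; exact hc))
  · have hne : ¬ mul u (mul y (res y f)) ≤ f := by
      intro h
      apply hc
      have h2 : res y f ≤ res (mul u y) f :=
        (hadj (mul u y) (res y f) f).mp (by rw [hassoc]; exact h)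
      have h3 := swap (res y f) (mul u y) h2
      rwa [hinv] at h3
    have ht' : t ≤ mul u (mul y (res y f)) := cover _ (lt_of_not_ge hne)
    have key : mul u x ≤ x := by
      calc mul u x = mul u (mul x t) := by rw [hcomm x t, hone]
        _ ≤ mul u (mul x (mul u (mul y (res y f)))) := monoR u (monoR x ht')
        _ = mul (mul u (mul u (mul x y))) (res y f) := by ac_rfl
        _ ≤ mul (mul x y) (res y f) := monoL _ ((monoR u hxy).trans hxy)
        _ = mul x (mul y (res y f)) := hassoc x y (res y f)
        _ ≤ mul x f := monoR x (app y f)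
        _ ≤ mul x t := monoR x hft
        _ = x := by rw [hcomm, hone]
    exact le_max_of_le_left ((hadj x u x).mp (by rw [hcomm]; exact key))
end

section
/- Let X be a discretely ordered, cancellative, odd involutive FL_e-chain (X, ≤, *, →, t, t). Then the structure X↓ = (X, ≤, *, →, t, t↓), obtained by replacing the falsum constant t by the predecessor t↓ of t, is a discretely ordered, cancellative, even involutive FL_e-chain; in particular its residual complement x ↦ x→t↓ is an order-reversing involution equal to x ↦ (x→t)↓. -/
/-- For a discretely ordered, cancellative, odd involutive FL_e-chain (falsum = t),
replacing the falsum by t↓ yields a (discretely ordered, cancellative) even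
involutive FL_e-chain: the new residual complement x ↦ x→t↓ is an order-reversing
involution and equals x ↦ (x→t)↓. -/
theorem stmt16 {X : Type*} [LinearOrder X] (mul res : X → X → X) (t : X)
    (pred succ : X → X)
    (hcomm : ∀ x y : X, mul x y = mul y x)
    (hassoc : ∀ x y z : X, mul (mul x y) z = mul x (mul y z))
    (hone : ∀ x : X, mul t x = x)
    (hadj : ∀ x y z : X, mul x y ≤ z ↔ y ≤ res x z)
    (hinv : ∀ x : X, res (res x t) t = x)
    (hcanc : ∀ x y z : X, mul x z = mul y z → x = y)
    (hpred : ∀ x : X, pred x < x ∧ ∀ z, z < x → z ≤ pred x)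
    (hsucc : ∀ x : X, x < succ x ∧ ∀ z, x < z → succ x ≤ z) :
    (∀ x : X, res (res x (pred t)) (pred t) = x) ∧
    (∀ x : X, res x (pred t) = pred (res x t)) ∧
    (∀ x y : X, x ≤ y → res y (pred t) ≤ res x (pred t)) := by
  -- basic facts
  have app : ∀ x z : X, mul x (res x z) ≤ z := fun x z => (hadj x (res x z) z).mpr le_rfl
  have mono2 : ∀ a b c : X, b ≤ c → mul a b ≤ mul a c := by
    intro a b c h
    exact (hadj a b (mul a c)).mpr (le_trans h ((hadj a c (mul a c)).mp le_rfl))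
  have mono1 : ∀ a b c : X, a ≤ b → mul a c ≤ mul b c := by
    intro a b c h
    rw [hcomm a c, hcomm b c]; exact mono2 c a b h
  have anti : ∀ c x y : X, x ≤ y → res y c ≤ res x c := by
    intro c x y h
    exact (hadj x (res y c) c).mp (le_trans (mono1 x y (res y c) h) (app y c))
  have inj : ∀ x y : X, res x t = res y t → x = y := by
    intro x y h
    rw [← hinv x, ← hinv y, h]
  have anti_strict : ∀ x y : X, x < y → res y t < res x t := by
    intro x y h
    rcases lt_or_eq_of_le (anti t x y h.le) with h' | h'
    · exact h'
    · exact absurd (inj y x h') (ne_of_gt h)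
  have tt : res t t = t := by
    have h1 : res t t ≤ t := by have := app t t; rwa [hone] at this
    have h2 : t ≤ res t t := (hadj t t t).mp (le_of_eq (hone t))
    exact le_antisymm h1 h2
  -- key cancellativity fact: x * (x → t) = t
  have key : ∀ x : X, mul x (res x t) = t := by
    intro x
    set x' := res x t with hx'
    rcases lt_or_eq_of_le (app x t) with hlt | heq
    · exfalso
      set a := mul x x' with ha
      have hta : t ≤ res a t := (hadj a t t).mp (by rw [hcomm, hone]; exact hlt.le)
      have hne : res a t ≠ t := by
        intro h
        have := hinv a
        rw [h, tt] at this
        exact absurd this.symm (ne_of_lt hlt)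
      have hst : succ t ≤ res a t := (hsucc t).2 _ (lt_of_le_of_ne hta (Ne.symm hne))
      -- x' * (res a t) ≤ x'
      have h1 : mul a (res a t) ≤ t := app a t
      have h2 : mul x (mul x' (res a t)) ≤ t := by rw [← hassoc]; exact h1
      have h3 : mul x' (res a t) ≤ x' := (hadj x _ t).mp h2
      -- but x' * (res a t) ≥ x' * succ t > x'
      have h4 : x' < mul x' (succ t) := by
        have hle : x' ≤ mul x' (succ t) := by
          have := mono2 x' t (succ t) (hsucc t).1.le
          rwa [hcomm x' t, hone] at this
        rcases lt_or_eq_of_le hle with h | h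
        · exact h
        · exfalso
          have : mul (succ t) x' = mul t x' := by rw [hcomm, ← h, hone]
          exact absurd (hcanc _ _ _ this) (ne_of_gt (hsucc t).1)
      have h5 : mul x' (succ t) ≤ mul x' (res a t) := mono2 x' _ _ hst
      exact absurd (le_trans h5 h3) (not_le_of_gt h4)
    · exact heq
  -- part (2)
  have part2 : ∀ x : X, res x (pred t) = pred (res x t) := by
    intro x
    set x' := res x t with hx'
    have h1 : mul x (pred x') ≤ pred t := by
      have hle : mul x (pred x') ≤ t := by
        rw [← key x]; exact mono2 x _ _ (hpred x').1.le
      rcases lt_or_eq_of_le hle with h | h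
      · exact (hpred t).2 _ h
      · exfalso
        have : mul (pred x') x = mul x' x := by
          rw [hcomm (pred x') x, hcomm x' x, h, key x]
        exact absurd (hcanc _ _ _ this) (ne_of_lt (hpred x').1)
    have h2 : pred x' ≤ res x (pred t) := (hadj x _ (pred t)).mp h1
    have h3 : res x (pred t) ≤ pred x' := by
      have hle : res x (pred t) ≤ x' :=
        (hadj x _ t).mp (le_trans (app x (pred t)) (hpred t).1.le)
      rcases lt_or_eq_of_le hle with h | h
      · exact (hpred x').2 _ h
      · exfalso
        have := app x (pred t)
        rw [h, key x] at this
        exact absurd this (not_le_of_gt (hpred t).1)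
    exact le_antisymm h3 h2
  -- pred ∘ succ = id
  have predsucc : ∀ x : X, pred (succ x) = x := by
    intro x
    refine le_antisymm ?_ ((hpred (succ x)).2 x (hsucc x).1)
    by_contra h
    push_neg at h
    exact absurd ((hsucc x).2 _ h) (not_le_of_gt (hpred (succ x)).1)
  -- (pred y)' = succ (y')
  have inv_pred : ∀ y : X, res (pred y) t = succ (res y t) := by
    intro y
    have h1 : succ (res y t) ≤ res (pred y) t :=
      (hsucc (res y t)).2 _ (anti_strict _ _ (hpred y).1)
    have h2 : res (pred y) t ≤ succ (res y t) := by
      have ha : res (succ (res y t)) t < y := by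
        have := anti_strict _ _ (hsucc (res y t)).1
        rwa [hinv y] at this
      have hb : res (succ (res y t)) t ≤ pred y := (hpred y).2 _ ha
      have := anti t _ _ hb
      rwa [hinv] at this
    exact le_antisymm h2 h1
  refine ⟨?_, part2, fun x y h => anti (pred t) x y h⟩
  intro x
  rw [part2 x, part2 (pred (res x t)), inv_pred, hinv, predsucc]
end

section
/- Let X be an odd involutive FL_e-algebra and H a cancellative subalgebra of X. Then the H-split Sp(X,H), obtained by inserting below each element h of H a new element ḣ (covered by h), with product x ⋆ y = h(x)*h(y) except that x ⋆ y = (h(x)*h(y))↓ when not both x,y are in H and h(x)*h(y) ∈ H (where h maps new elements to their covers and is the identity otherwise), is an even involutive FL_e-algebra whose falsum constant ṫ = t↓ is idempotent. -/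
open Classical

/-! The H-split `Sp(X,H)` of an odd involutive FL_e-algebra `X` (falsum = t,
residual complement x' = x→t) by a cancellative subalgebra `H`.  Its universe is
`X ⊕ H` (the `inr` elements are the new "dotted" copies ḣ inserted just below
the corresponding h ∈ H). -/

/-- The map sending each new element ḣ to its cover h and fixing old elements. -/
def splitH {X : Type*} (H : Set X) : X ⊕ {h : X // h ∈ H} → X :=
  Sum.elim id Subtype.val

/-- The order of the H-split: ḣ is strictly between h and everything below. -/
def splitLe {X : Type*} [Lattice X] (H : Set X) :
    X ⊕ {h : X // h ∈ H} → X ⊕ {h : X // h ∈ H} → Prop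
  | Sum.inl x, Sum.inl y => x ≤ y
  | Sum.inl x, Sum.inr b => x < b.1
  | Sum.inr a, Sum.inl y => a.1 ≤ y
  | Sum.inr a, Sum.inr b => a.1 ≤ b.1

/-- The product of the H-split: x ⋆ y = h(x)*h(y), except that the result is the
dotted copy (h(x)*h(y))↓ when not both x,y lie in H and h(x)*h(y) ∈ H. -/
noncomputable def splitMul {X : Type*} (mul : X → X → X) (H : Set X) :
    X ⊕ {h : X // h ∈ H} → X ⊕ {h : X // h ∈ H} → X ⊕ {h : X // h ∈ H} :=
  fun a b =>
    let p := mul (splitH H a) (splitH H b)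
    have bothH : Prop := (∃ x, a = Sum.inl x ∧ x ∈ H) ∧ (∃ y, b = Sum.inl y ∧ y ∈ H)
    if h : p ∈ H ∧ ¬ bothH then Sum.inr ⟨p, h.1⟩ else Sum.inl p

/-- The residual complement of the H-split: x ∈ X∖H ↦ x', x ∈ H ↦ (x')↓,
ḣ ↦ h'. -/
noncomputable def splitNeg {X : Type*} (res : X → X → X) (t : X) (H : Set X)
    (hHneg : ∀ x ∈ H, res x t ∈ H) :
    X ⊕ {h : X // h ∈ H} → X ⊕ {h : X // h ∈ H}
  | Sum.inl x =>
      if hx : x ∈ H then Sum.inr ⟨res x t, hHneg x hx⟩ else Sum.inl (res x t)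
  | Sum.inr h => Sum.inl (res h.1 t)

/-- The residual operation of the H-split: x →⋆ y = (x ⋆ y')'. -/
noncomputable def splitRes {X : Type*} (mul res : X → X → X) (t : X) (H : Set X)
    (hHneg : ∀ x ∈ H, res x t ∈ H) :
    X ⊕ {h : X // h ∈ H} → X ⊕ {h : X // h ∈ H} → X ⊕ {h : X // h ∈ H} :=
  fun a b => splitNeg res t H hHneg (splitMul mul H a (splitNeg res t H hHneg b))

theorem dite_sum_congr17 {X : Type*} {H : Set X} {p q : X} {P Q : Prop}
    [Decidable (p ∈ H ∧ P)] [Decidable (q ∈ H ∧ Q)]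
    (hpq : p = q) (hPQ : (p ∈ H ∧ P) ↔ (q ∈ H ∧ Q)) :
    (if h : p ∈ H ∧ P then (Sum.inr ⟨p, h.1⟩ : X ⊕ {h : X // h ∈ H}) else Sum.inl p) =
    (if h : q ∈ H ∧ Q then Sum.inr ⟨q, h.1⟩ else Sum.inl q) := by
  subst hpq
  by_cases h : p ∈ H ∧ P
  · rw [dif_pos h, dif_pos (hPQ.mp h)]
  · rw [dif_neg h, dif_neg (fun hq => h (hPQ.mpr hq))]

theorem splitMul_def {X : Type*} (mul : X → X → X) (H : Set X)
    (a b : X ⊕ {h : X // h ∈ H}) :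
    splitMul mul H a b = if h : mul (splitH H a) (splitH H b) ∈ H ∧
        ¬((∃ x, a = Sum.inl x ∧ x ∈ H) ∧ (∃ y, b = Sum.inl y ∧ y ∈ H))
      then Sum.inr ⟨mul (splitH H a) (splitH H b), h.1⟩
      else Sum.inl (mul (splitH H a) (splitH H b)) := by
  simp only [splitMul]
  by_cases h : mul (splitH H a) (splitH H b) ∈ H ∧
      ¬((∃ x, a = Sum.inl x ∧ x ∈ H) ∧ (∃ y, b = Sum.inl y ∧ y ∈ H))
  · rw [dif_pos h, dif_pos h]
  · rw [dif_neg h, dif_neg h]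

theorem inlH_iff17 {X : Type*} {H : Set X} (q : X) :
    (∃ x, (Sum.inl q : X ⊕ {h : X // h ∈ H}) = Sum.inl x ∧ x ∈ H) ↔ q ∈ H := by
  constructor
  · rintro ⟨x, hx, hxH⟩; cases Sum.inl.inj hx; exact hxH
  · intro h; exact ⟨q, rfl, h⟩

theorem inrH_false17 {X : Type*} {H : Set X} (w : {h : X // h ∈ H}) :
    ¬ (∃ x, (Sum.inr w : X ⊕ {h : X // h ∈ H}) = Sum.inl x ∧ x ∈ H) := by
  rintro ⟨x, hx, -⟩; exact nomatch hx

theorem splitMul_ll_pos {X : Type*} (mul : X → X → X) (H : Set X) (x y : X)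
    (h1 : mul x y ∈ H) (h2 : ¬(x ∈ H ∧ y ∈ H)) :
    splitMul mul H (Sum.inl x) (Sum.inl y) = Sum.inr ⟨mul x y, h1⟩ := by
  rw [splitMul_def, dif_pos ⟨h1, fun hc =>
    h2 ⟨(inlH_iff17 x).mp hc.1, (inlH_iff17 y).mp hc.2⟩⟩]
  rfl

theorem splitMul_ll_neg {X : Type*} (mul : X → X → X) (H : Set X) (x y : X)
    (h : ¬(mul x y ∈ H ∧ ¬(x ∈ H ∧ y ∈ H))) :
    splitMul mul H (Sum.inl x) (Sum.inl y) = Sum.inl (mul x y) := by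
  rw [splitMul_def, dif_neg (fun hc => h ⟨hc.1, fun hb =>
    hc.2 ⟨⟨x, rfl, hb.1⟩, ⟨y, rfl, hb.2⟩⟩⟩)]
  rfl

theorem splitMul_lr_pos {X : Type*} (mul : X → X → X) (H : Set X) (x : X)
    (k : {h : X // h ∈ H}) (hm : mul x k.1 ∈ H) :
    splitMul mul H (Sum.inl x) (Sum.inr k) = Sum.inr ⟨mul x k.1, hm⟩ := by
  rw [splitMul_def, dif_pos ⟨hm, fun hc => inrH_false17 _ hc.2⟩]
  rfl

theorem splitMul_lr_neg {X : Type*} (mul : X → X → X) (H : Set X) (x : X)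
    (k : {h : X // h ∈ H}) (hm : mul x k.1 ∉ H) :
    splitMul mul H (Sum.inl x) (Sum.inr k) = Sum.inl (mul x k.1) := by
  rw [splitMul_def, dif_neg (fun hc => hm hc.1)]
  rfl

theorem splitMul_rl_pos {X : Type*} (mul : X → X → X) (H : Set X)
    (k : {h : X // h ∈ H}) (y : X) (hm : mul k.1 y ∈ H) :
    splitMul mul H (Sum.inr k) (Sum.inl y) = Sum.inr ⟨mul k.1 y, hm⟩ := by
  rw [splitMul_def, dif_pos ⟨hm, fun hc => inrH_false17 _ hc.1⟩]
  rfl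

theorem splitMul_rl_neg {X : Type*} (mul : X → X → X) (H : Set X)
    (k : {h : X // h ∈ H}) (y : X) (hm : mul k.1 y ∉ H) :
    splitMul mul H (Sum.inr k) (Sum.inl y) = Sum.inl (mul k.1 y) := by
  rw [splitMul_def, dif_neg (fun hc => hm hc.1)]
  rfl

theorem splitMul_rr17 {X : Type*} (mul : X → X → X) (H : Set X)
    (k l : {h : X // h ∈ H}) (hm : mul k.1 l.1 ∈ H) :
    splitMul mul H (Sum.inr k) (Sum.inr l) = Sum.inr ⟨mul k.1 l.1, hm⟩ := by
  rw [splitMul_def, dif_pos ⟨hm, fun hc => inrH_false17 _ hc.1⟩]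
  rfl

/-- Splitting an odd involutive FL_e-algebra `X` by a cancellative subalgebra `H`
yields an even involutive FL_e-algebra whose falsum constant ṫ = t↓ is idempotent. -/
theorem stmt17 {X : Type*} [Lattice X] (mul res : X → X → X) (t : X)
    (hcomm : ∀ x y : X, mul x y = mul y x)
    (hassoc : ∀ x y z : X, mul (mul x y) z = mul x (mul y z))
    (hone : ∀ x : X, mul t x = x)
    (hadj : ∀ x y z : X, mul x y ≤ z ↔ y ≤ res x z)
    (hinv : ∀ x : X, res (res x t) t = x)
    (H : Set X) (htH : t ∈ H)
    (hHmul : ∀ x ∈ H, ∀ y ∈ H, mul x y ∈ H)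
    (hHneg : ∀ x ∈ H, res x t ∈ H)
    (hHsup : ∀ x ∈ H, ∀ y ∈ H, x ⊔ y ∈ H)
    (hHinf : ∀ x ∈ H, ∀ y ∈ H, x ⊓ y ∈ H)
    (hHinv : ∀ x ∈ H, mul x (res x t) = t) :
    -- notation: Y = X ⊕ Ḣ, ⋆ = splitMul, ≤⋆ = splitLe, falsum ṫ = inr t
    (∀ a b, splitMul mul H a b = splitMul mul H b a) ∧
    (∀ a b c, splitMul mul H (splitMul mul H a b) c
            = splitMul mul H a (splitMul mul H b c)) ∧
    (∀ a, splitMul mul H (Sum.inl t) a = a) ∧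
    -- ≤⋆ is a partial order ...
    (∀ a, splitLe H a a) ∧
    (∀ a b, splitLe H a b → splitLe H b a → a = b) ∧
    (∀ a b c, splitLe H a b → splitLe H b c → splitLe H a c) ∧
    -- ... which is a lattice order
    (∀ a b, ∃ s, splitLe H a s ∧ splitLe H b s ∧
        ∀ c, splitLe H a c → splitLe H b c → splitLe H s c) ∧
    (∀ a b, ∃ i, splitLe H i a ∧ splitLe H i b ∧
        ∀ c, splitLe H c a → splitLe H c b → splitLe H c i) ∧
    -- ⋆ is residuated by splitRes
    (∀ a b c, splitLe H (splitMul mul H a b) c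
            ↔ splitLe H b (splitRes mul res t H hHneg a c)) ∧
    -- the algebra is involutive with falsum constant ṫ
    (∀ a, splitRes mul res t H hHneg
            (splitRes mul res t H hHneg a (Sum.inr ⟨t, htH⟩)) (Sum.inr ⟨t, htH⟩) = a) ∧
    -- the falsum constant ṫ is idempotent
    (splitMul mul H (Sum.inr ⟨t, htH⟩) (Sum.inr ⟨t, htH⟩) = (Sum.inr ⟨t, htH⟩ :
        X ⊕ {h : X // h ∈ H})) ∧
    -- evenness: the unit t is the unique cover of the falsum ṫ = t↓
    (splitLe H (Sum.inr ⟨t, htH⟩) (Sum.inl t) ∧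
      (Sum.inr ⟨t, htH⟩ : X ⊕ {h : X // h ∈ H}) ≠ Sum.inl t ∧
      ∀ z, splitLe H (Sum.inr ⟨t, htH⟩) z → z ≠ Sum.inr ⟨t, htH⟩ →
        splitLe H (Sum.inl t) z) := by
  -- ### X-level facts
  haveI : Std.Associative mul := ⟨hassoc⟩
  haveI : Std.Commutative mul := ⟨hcomm⟩
  have unit2 : ∀ x : X, mul x t = x := fun x => (hcomm x t).trans (hone x)
  have mono : ∀ (x : X) {y z : X}, y ≤ z → mul x y ≤ mul x z := by
    intro x y z h
    exact (hadj x y (mul x z)).2 (le_trans h ((hadj x z (mul x z)).1 le_rfl))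
  have counit : ∀ x z : X, mul x (res x z) ≤ z := fun x z => (hadj x (res x z) z).2 le_rfl
  have restt : res t t = t := by
    apply le_antisymm
    · have h := counit t t; rwa [hone] at h
    · exact (hadj t t t).1 (le_of_eq (hone t))
  have memH_neg : ∀ {x : X}, res x t ∈ H → x ∈ H := by
    intro x hx
    have h := hHneg _ hx
    rwa [hinv] at h
  have mul_inv : ∀ {h : X}, h ∈ H → ∀ x : X, mul (res h t) (mul h x) = x := by
    intro h hh x
    rw [← hassoc, hcomm (res h t) h, hHinv h hh, hone]
  have memH_mul : ∀ {h : X}, h ∈ H → ∀ {x : X}, mul h x ∈ H → x ∈ H := by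
    intro h hh x hx
    have h2 := hHmul _ (hHneg h hh) _ hx
    rwa [mul_inv hh] at h2
  have cancel_le : ∀ {h : X}, h ∈ H → ∀ {x y : X}, mul h x ≤ mul h y ↔ x ≤ y := by
    intro h hh x y
    constructor
    · intro hle
      have h2 := mono (res h t) hle
      rwa [mul_inv hh, mul_inv hh] at h2
    · exact mono h
  have res_inv : ∀ {h : X}, h ∈ H → ∀ z : X, res h z = mul (res h t) z := by
    intro h hh z
    apply le_antisymm
    · have h1 : mul (res h t) (mul h (res h z)) ≤ mul (res h t) z := mono _ (counit h z)
      rwa [mul_inv hh] at h1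
    · apply (hadj h _ z).1
      rw [← hassoc, hHinv h hh, hone]
  have mul_res_self : ∀ {h : X}, h ∈ H → ∀ z : X, mul h (res h z) = z := by
    intro h hh z
    rw [res_inv hh, ← hassoc, hHinv h hh, hone]
  have eq_res_iff : ∀ {h : X}, h ∈ H → ∀ {y z : X}, mul h y = z ↔ y = res h z := by
    intro h hh y z
    constructor
    · intro he
      have := congrArg (mul (res h t)) he
      rw [mul_inv hh] at this
      exact this.trans (res_inv hh z).symm
    · intro he; rw [he, mul_res_self hh]
  have res_eq : ∀ x y : X, res x y = res (mul x (res y t)) t := by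
    intro x y
    apply le_antisymm
    · apply (hadj _ _ t).1
      have h1 : mul (res y t) (mul x (res x y)) ≤ mul (res y t) y := mono _ (counit x y)
      have h2 : mul (res y t) y ≤ t := by rw [hcomm]; exact counit y t
      calc mul (mul x (res y t)) (res x y)
          = mul (res y t) (mul x (res x y)) := by ac_rfl
        _ ≤ t := le_trans h1 h2
    · apply (hadj x _ y).1
      have h3 : mul (res y t) (mul x (res (mul x (res y t)) t)) ≤ t := by
        calc mul (res y t) (mul x (res (mul x (res y t)) t))
            = mul (mul x (res y t)) (res (mul x (res y t)) t) := by ac_rfl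
          _ ≤ t := counit _ t
      have h4 := (hadj (res y t) _ t).1 h3
      rwa [hinv] at h4
  -- ### split-level helpers
  have vinl : ∀ x : X, splitH H (Sum.inl x : X ⊕ {h : X // h ∈ H}) = x := fun _ => rfl
  have vinr : ∀ w : {h : X // h ∈ H}, splitH H (Sum.inr w) = w.1 := fun _ => rfl
  have le_ll : ∀ x y : X, splitLe H (Sum.inl x) (Sum.inl y) ↔ x ≤ y := fun _ _ => Iff.rfl
  have le_lr : ∀ (x : X) (w : {h : X // h ∈ H}),
      splitLe H (Sum.inl x) (Sum.inr w) ↔ x < w.1 := fun _ _ => Iff.rfl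
  have le_rl : ∀ (w : {h : X // h ∈ H}) (x : X),
      splitLe H (Sum.inr w) (Sum.inl x) ↔ w.1 ≤ x := fun _ _ => Iff.rfl
  have le_rr : ∀ (v w : {h : X // h ∈ H}),
      splitLe H (Sum.inr v) (Sum.inr w) ↔ v.1 ≤ w.1 := fun _ _ => Iff.rfl
  have le_inl : ∀ (u : X ⊕ {h : X // h ∈ H}) (z : X),
      splitLe H u (Sum.inl z) ↔ splitH H u ≤ z := by
    rintro (x | w) z <;> exact Iff.rfl
  have val_mul : ∀ a b, splitH H (splitMul mul H a b)
      = mul (splitH H a) (splitH H b) := by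
    intro a b
    rw [splitMul_def]
    split <;> rfl
  have lt_of_mem : ∀ {p w : X}, p ∉ H → w ∈ H → (p < w ↔ p ≤ w) := by
    intro p w hp hw
    exact ⟨le_of_lt, fun h => lt_of_le_of_ne h (fun e => hp (by rw [e]; exact hw))⟩
  -- ### commutativity
  have comm : ∀ a b, splitMul mul H a b = splitMul mul H b a := by
    intro a b
    rw [splitMul_def, splitMul_def]
    refine dite_sum_congr17 (hcomm _ _) ⟨?_, ?_⟩
    · rintro ⟨h1, h2⟩
      exact ⟨by rw [hcomm (splitH H b) (splitH H a)]; exact h1,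
        fun hc => h2 ⟨hc.2, hc.1⟩⟩
    · rintro ⟨h1, h2⟩
      exact ⟨by rw [hcomm (splitH H a) (splitH H b)]; exact h1,
        fun hc => h2 ⟨hc.2, hc.1⟩⟩
  -- ### associativity
  have mul3 : ∀ a b c, splitMul mul H (splitMul mul H a b) c =
      if h : mul (mul (splitH H a) (splitH H b)) (splitH H c) ∈ H ∧
          ¬((∃ x, a = Sum.inl x ∧ x ∈ H) ∧ (∃ y, b = Sum.inl y ∧ y ∈ H) ∧
            (∃ z, c = Sum.inl z ∧ z ∈ H))
      then Sum.inr ⟨mul (mul (splitH H a) (splitH H b)) (splitH H c), h.1⟩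
      else Sum.inl (mul (mul (splitH H a) (splitH H b)) (splitH H c)) := by
    intro a b c
    rw [splitMul_def mul H a b]
    by_cases hq : mul (splitH H a) (splitH H b) ∈ H ∧
        ¬((∃ x, a = Sum.inl x ∧ x ∈ H) ∧ (∃ y, b = Sum.inl y ∧ y ∈ H))
    · rw [dif_pos hq, splitMul_def]
      refine dite_sum_congr17 rfl ⟨?_, ?_⟩
      · rintro ⟨h1, -⟩
        exact ⟨h1, fun hc => hq.2 ⟨hc.1, hc.2.1⟩⟩
      · rintro ⟨h1, -⟩
        exact ⟨h1, fun hc => inrH_false17 _ hc.1⟩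
    · rw [dif_neg hq, splitMul_def]
      refine dite_sum_congr17 rfl ⟨?_, ?_⟩
      · rintro ⟨h1, h2⟩
        refine ⟨h1, fun hc => ?_⟩
        obtain ⟨⟨xa, ha, haH⟩, ⟨xb, hb, hbH⟩, hC⟩ := hc
        have hqH : mul (splitH H a) (splitH H b) ∈ H := by
          rw [ha, hb, vinl, vinl]; exact hHmul _ haH _ hbH
        exact h2 ⟨(inlH_iff17 _).mpr hqH, hC⟩
      · rintro ⟨h1, h2⟩
        refine ⟨h1, fun hc => ?_⟩
        have hqH := (inlH_iff17 _).mp hc.1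
        have hAB : (∃ x, a = Sum.inl x ∧ x ∈ H) ∧ (∃ y, b = Sum.inl y ∧ y ∈ H) := by
          by_contra hn
          exact hq ⟨hqH, hn⟩
        exact h2 ⟨hAB.1, hAB.2, hc.2⟩
  have assoc : ∀ a b c, splitMul mul H (splitMul mul H a b) c
      = splitMul mul H a (splitMul mul H b c) := by
    intro a b c
    rw [mul3, comm a (splitMul mul H b c), mul3 b c a]
    have e : mul (mul (splitH H a) (splitH H b)) (splitH H c)
           = mul (mul (splitH H b) (splitH H c)) (splitH H a) := by ac_rfl
    refine dite_sum_congr17 e ⟨?_, ?_⟩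
    · rintro ⟨h1, h2⟩
      exact ⟨by rw [← e]; exact h1, fun hc => h2 ⟨hc.2.2, hc.1, hc.2.1⟩⟩
    · rintro ⟨h1, h2⟩
      exact ⟨by rw [e]; exact h1, fun hc => h2 ⟨hc.2.1, hc.2.2, hc.1⟩⟩
  -- ### unit
  have unit : ∀ a, splitMul mul H (Sum.inl t) a = a := by
    rintro (x | ⟨h, hh⟩)
    · rw [splitMul_def]
      rw [dif_neg]
      · show Sum.inl (mul t x) = Sum.inl x
        rw [hone]
      · rintro ⟨h1, h2⟩
        refine h2 ⟨⟨t, rfl, htH⟩, ⟨x, rfl, ?_⟩⟩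
        rw [vinl, vinl, hone] at h1
        exact h1
    · rw [splitMul_def]
      have hc : mul (splitH H (Sum.inl t : X ⊕ {h : X // h ∈ H}))
            (splitH H (Sum.inr (⟨h, hh⟩ : {h : X // h ∈ H}))) ∈ H ∧
          ¬((∃ x, (Sum.inl t : X ⊕ {h : X // h ∈ H}) = Sum.inl x ∧ x ∈ H) ∧
            (∃ y, (Sum.inr (⟨h, hh⟩ : {h : X // h ∈ H}) : X ⊕ {h : X // h ∈ H})
              = Sum.inl y ∧ y ∈ H)) := by
        constructor
        · rw [vinl, vinr]; show mul t h ∈ H; rw [hone]; exact hh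
        · rintro ⟨-, hy⟩; exact inrH_false17 _ hy
      rw [dif_pos hc]
      exact congrArg Sum.inr (Subtype.ext (hone h))
  -- ### order: partial order
  have orefl : ∀ a, splitLe H a a := by
    rintro (x | w) <;> exact le_rfl
  have oantisymm : ∀ a b, splitLe H a b → splitLe H b a → a = b := by
    rintro (x | v) (y | w) h1 h2
    · exact congrArg Sum.inl (le_antisymm h1 h2)
    · exact absurd ((le_lr x w).1 h1) (not_lt_of_ge ((le_rl w x).1 h2))
    · exact absurd ((le_lr y v).1 h2) (not_lt_of_ge ((le_rl v y).1 h1))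
    · exact congrArg Sum.inr (Subtype.ext (le_antisymm h1 h2))
  have otrans : ∀ a b c, splitLe H a b → splitLe H b c → splitLe H a c := by
    rintro (x | u) (y | v) (z | w) h1 h2
    · exact le_trans h1 h2
    · exact lt_of_le_of_lt (α := X) h1 h2
    · exact le_trans (le_of_lt h1) h2
    · exact lt_of_lt_of_le (α := X) h1 h2
    · exact le_trans (α := X) h1 h2
    · exact le_trans (α := X) h1 (le_of_lt h2)
    · exact le_trans (α := X) h1 h2
    · exact le_trans (α := X) h1 h2
  -- ### sup
  have osup : ∀ a b, ∃ s, splitLe H a s ∧ splitLe H b s ∧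
      ∀ c, splitLe H a c → splitLe H b c → splitLe H s c := by
    have mixed : ∀ (x : X) (b : {h : X // h ∈ H}), ∃ s,
        splitLe H (Sum.inl x) s ∧ splitLe H (Sum.inr b) s ∧
        ∀ c, splitLe H (Sum.inl x) c → splitLe H (Sum.inr b) c → splitLe H s c := by
      intro x b
      by_cases hbx : b.1 ≤ x
      · exact ⟨Sum.inl x, le_rfl, hbx, fun c h1 _ => h1⟩
      · have hne : x ≠ x ⊔ b.1 := fun e => hbx (le_sup_right.trans (le_of_eq e.symm))
        by_cases hsH : x ⊔ b.1 ∈ H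
        · refine ⟨Sum.inr ⟨x ⊔ b.1, hsH⟩, lt_of_le_of_ne le_sup_left hne, le_sup_right, ?_⟩
          rintro (z | f) h1 h2
          · exact sup_le ((le_ll x z).1 h1) ((le_rl b z).1 h2)
          · exact sup_le (le_of_lt ((le_lr x f).1 h1)) ((le_rr b f).1 h2)
        · refine ⟨Sum.inl (x ⊔ b.1), le_sup_left, le_sup_right, ?_⟩
          rintro (z | f) h1 h2
          · exact sup_le ((le_ll x z).1 h1) ((le_rl b z).1 h2)
          · refine lt_of_le_of_ne (sup_le (le_of_lt ((le_lr x f).1 h1)) ((le_rr b f).1 h2))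
              (fun e => hsH (by rw [e]; exact f.2))
    rintro (x | v) (y | w)
    · by_cases h : (x ⊔ y ∈ H) ∧ x ≠ x ⊔ y ∧ y ≠ x ⊔ y
      · refine ⟨Sum.inr ⟨x ⊔ y, h.1⟩, lt_of_le_of_ne le_sup_left h.2.1,
          lt_of_le_of_ne le_sup_right h.2.2, ?_⟩
        rintro (z | f) h1 h2
        · exact sup_le ((le_ll x z).1 h1) ((le_ll y z).1 h2)
        · exact sup_le (le_of_lt ((le_lr x f).1 h1)) (le_of_lt ((le_lr y f).1 h2))
      · refine ⟨Sum.inl (x ⊔ y), le_sup_left, le_sup_right, ?_⟩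
        rintro (z | f) h1 h2
        · exact sup_le ((le_ll x z).1 h1) ((le_ll y z).1 h2)
        · have hx := (le_lr x f).1 h1
          have hy := (le_lr y f).1 h2
          refine lt_of_le_of_ne (sup_le hx.le hy.le) (fun e => h ?_)
          exact ⟨by rw [e]; exact f.2, fun e2 => hx.ne (e2.trans e),
            fun e2 => hy.ne (e2.trans e)⟩
    · exact mixed x w
    · obtain ⟨s, h1, h2, h3⟩ := mixed y v
      exact ⟨s, h2, h1, fun c hc1 hc2 => h3 c hc2 hc1⟩
    · refine ⟨Sum.inr ⟨v.1 ⊔ w.1, hHsup _ v.2 _ w.2⟩, le_sup_left, le_sup_right, ?_⟩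
      rintro (z | f) h1 h2
      · exact sup_le ((le_rl v z).1 h1) ((le_rl w z).1 h2)
      · exact sup_le ((le_rr v f).1 h1) ((le_rr w f).1 h2)
  -- ### inf
  have oinf : ∀ a b, ∃ i, splitLe H i a ∧ splitLe H i b ∧
      ∀ c, splitLe H c a → splitLe H c b → splitLe H c i := by
    have mixed : ∀ (x : X) (b : {h : X // h ∈ H}), ∃ i,
        splitLe H i (Sum.inl x) ∧ splitLe H i (Sum.inr b) ∧
        ∀ c, splitLe H c (Sum.inl x) → splitLe H c (Sum.inr b) → splitLe H c i := by
      intro x b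
      by_cases hbx : b.1 ≤ x
      · exact ⟨Sum.inr b, hbx, le_rfl, fun c _ h2 => h2⟩
      · refine ⟨Sum.inl (x ⊓ b.1), inf_le_left, ?_, ?_⟩
        · exact lt_of_le_of_ne inf_le_right (fun e => hbx (by rw [← e]; exact inf_le_left))
        · rintro (z | g) h1 h2
          · exact le_inf ((le_ll z x).1 h1) (le_of_lt ((le_lr z b).1 h2))
          · exact le_inf ((le_rl g x).1 h1) ((le_rr g b).1 h2)
    rintro (x | v) (y | w)
    · refine ⟨Sum.inl (x ⊓ y), inf_le_left, inf_le_right, ?_⟩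
      rintro (z | g) h1 h2
      · exact le_inf ((le_ll z x).1 h1) ((le_ll z y).1 h2)
      · exact le_inf ((le_rl g x).1 h1) ((le_rl g y).1 h2)
    · exact mixed x w
    · obtain ⟨i, h1, h2, h3⟩ := mixed y v
      exact ⟨i, h2, h1, fun c hc1 hc2 => h3 c hc2 hc1⟩
    · by_cases hvw : v.1 ≤ w.1
      · exact ⟨Sum.inr v, le_rfl, hvw, fun c h1 _ => h1⟩
      · by_cases hwv : w.1 ≤ v.1
        · exact ⟨Sum.inr w, hwv, le_rfl, fun c _ h2 => h2⟩
        · refine ⟨Sum.inl (v.1 ⊓ w.1), ?_, ?_, ?_⟩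
          · exact lt_of_le_of_ne inf_le_left (fun e => hvw (by rw [← e]; exact inf_le_right))
          · exact lt_of_le_of_ne inf_le_right (fun e => hwv (by rw [← e]; exact inf_le_left))
          · rintro (z | g) h1 h2
            · exact le_inf (le_of_lt ((le_lr z v).1 h1)) (le_of_lt ((le_lr z w).1 h2))
            · exact le_inf ((le_rr g v).1 h1) ((le_rr g w).1 h2)
  have coe_mk : ∀ (w : X) (hw : w ∈ H), ((⟨w, hw⟩ : {h : X // h ∈ H}) : X) = w :=
    fun _ _ => rfl
  -- ### negation helpers
  have neg_inl_pos : ∀ (x : X) (hx : x ∈ H),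
      splitNeg res t H hHneg (Sum.inl x) = Sum.inr ⟨res x t, hHneg x hx⟩ := by
    intro x hx
    show (if hx : x ∈ H then (Sum.inr ⟨res x t, hHneg x hx⟩ : X ⊕ {h : X // h ∈ H})
        else Sum.inl (res x t)) = Sum.inr ⟨res x t, hHneg x hx⟩
    rw [dif_pos hx]
  have neg_inl_neg : ∀ (x : X), x ∉ H →
      splitNeg res t H hHneg (Sum.inl x) = Sum.inl (res x t) := by
    intro x hx
    show (if hx : x ∈ H then (Sum.inr ⟨res x t, hHneg x hx⟩ : X ⊕ {h : X // h ∈ H})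
        else Sum.inl (res x t)) = Sum.inl (res x t)
    rw [dif_neg hx]
  have neg_inr : ∀ (w : {h : X // h ∈ H}),
      splitNeg res t H hHneg (Sum.inr w) = Sum.inl (res w.1 t) := fun _ => rfl
  -- ### the residual with codomain inl
  have res_c_inl : ∀ a (z : X), splitRes mul res t H hHneg a (Sum.inl z)
      = Sum.inl (res (splitH H a) z) := by
    intro a z
    show splitNeg res t H hHneg
        (splitMul mul H a (splitNeg res t H hHneg (Sum.inl z))) = _
    by_cases hz : z ∈ H
    · rw [neg_inl_pos z hz, splitMul_def]
      by_cases hp : mul (splitH H a)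
          (splitH H (Sum.inr (⟨res z t, hHneg z hz⟩ : {h : X // h ∈ H}))) ∈ H
      · rw [dif_pos ⟨hp, fun hc => inrH_false17 _ hc.2⟩, neg_inr]
        exact congrArg Sum.inl (res_eq (splitH H a) z).symm
      · rw [dif_neg (fun hc => hp hc.1), neg_inl_neg _ hp]
        exact congrArg Sum.inl (res_eq (splitH H a) z).symm
    · rw [neg_inl_neg z hz, splitMul_def]
      by_cases hp : mul (splitH H a) (splitH H (Sum.inl (res z t) : X ⊕ {h : X // h ∈ H})) ∈ H
      · rw [dif_pos ⟨hp, fun hc => hz (memH_neg ((inlH_iff17 _).mp hc.2))⟩, neg_inr]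
        exact congrArg Sum.inl (res_eq (splitH H a) z).symm
      · rw [dif_neg (fun hc => hp hc.1), neg_inl_neg _ hp]
        exact congrArg Sum.inl (res_eq (splitH H a) z).symm
  -- ### the residual with codomain inr
  have res_inr_inlH : ∀ (x : X), x ∈ H → ∀ (w : X) (hw : w ∈ H), ∃ hm : res x w ∈ H,
      splitRes mul res t H hHneg (Sum.inl x) (Sum.inr ⟨w, hw⟩) = Sum.inr ⟨res x w, hm⟩ := by
    intro x hx w hw
    have hmm : mul x (res w t) ∈ H := hHmul x hx _ (hHneg w hw)
    have hm : res x w ∈ H := by rw [res_eq x w]; exact hHneg _ hmm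
    refine ⟨hm, ?_⟩
    show splitNeg res t H hHneg
        (splitMul mul H (Sum.inl x) (splitNeg res t H hHneg (Sum.inr ⟨w, hw⟩))) = _
    rw [neg_inr, splitMul_def]
    rw [dif_neg (fun hc => hc.2 ⟨⟨x, rfl, hx⟩, ⟨res w t, rfl, hHneg w hw⟩⟩)]
    simp only [vinl, vinr, coe_mk]
    rw [neg_inl_pos _ hmm]
    exact congrArg Sum.inr (Subtype.ext (res_eq x w).symm)
  have res_inr_inlN : ∀ (x : X), x ∉ H → ∀ (w : X) (hw : w ∈ H),
      splitRes mul res t H hHneg (Sum.inl x) (Sum.inr ⟨w, hw⟩) = Sum.inl (res x w) := by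
    intro x hx w hw
    have hmm : mul x (res w t) ∉ H := by
      intro hmem
      exact hx (memH_mul (hHneg w hw) (by rw [hcomm]; exact hmem))
    show splitNeg res t H hHneg
        (splitMul mul H (Sum.inl x) (splitNeg res t H hHneg (Sum.inr ⟨w, hw⟩))) = _
    rw [neg_inr, splitMul_def]
    rw [dif_neg (fun hc => hmm hc.1)]
    simp only [vinl, vinr, coe_mk]
    rw [neg_inl_neg _ hmm]
    exact congrArg Sum.inl (res_eq x w).symm
  have res_inr_inr : ∀ (v : {h : X // h ∈ H}) (w : X) (hw : w ∈ H),
      splitRes mul res t H hHneg (Sum.inr v) (Sum.inr ⟨w, hw⟩) = Sum.inl (res v.1 w) := by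
    intro v w hw
    have hmm : mul v.1 (res w t) ∈ H := hHmul _ v.2 _ (hHneg w hw)
    show splitNeg res t H hHneg
        (splitMul mul H (Sum.inr v) (splitNeg res t H hHneg (Sum.inr ⟨w, hw⟩))) = _
    rw [neg_inr, splitMul_def]
    rw [dif_pos ⟨hmm, fun hc => inrH_false17 _ hc.1⟩]
    rw [neg_inr]
    exact congrArg Sum.inl (res_eq v.1 w).symm
  -- ### residuation
  have key : ∀ a b c, splitLe H (splitMul mul H a b) c
      ↔ splitLe H b (splitRes mul res t H hHneg a c) := by
    intro a b c
    rcases c with z | ⟨w, hw⟩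
    · rw [res_c_inl, le_inl, le_inl, val_mul]
      exact hadj _ _ _
    · rcases a with x | ⟨h, hh⟩
      · by_cases hx : x ∈ H
        · obtain ⟨hm, hr⟩ := res_inr_inlH x hx w hw
          rw [hr]
          rcases b with y | ⟨k, hk⟩
          · by_cases hy : y ∈ H
            · rw [splitMul_ll_neg mul H x y (fun hc => hc.2 ⟨hx, hy⟩)]
              show mul x y < w ↔ y < res x w
              constructor
              · intro hlt
                exact lt_of_le_of_ne ((hadj x y w).1 hlt.le)
                  (fun he => hlt.ne ((eq_res_iff hx).mpr he))
              · intro hlt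
                exact lt_of_le_of_ne ((hadj x y w).2 hlt.le)
                  (fun he => hlt.ne ((eq_res_iff hx).mp he))
            · have hpn : mul x y ∉ H := fun hmem => hy (memH_mul hx hmem)
              rw [splitMul_ll_neg mul H x y (fun hc => hpn hc.1)]
              show mul x y < w ↔ y < res x w
              rw [lt_of_mem hpn hw, lt_of_mem hy hm]
              exact hadj x y w
          · rw [splitMul_lr_pos mul H x ⟨k, hk⟩ (hHmul _ hx _ hk)]
            show mul x k ≤ w ↔ k ≤ res x w
            exact hadj x k w
        · rw [res_inr_inlN x hx w hw]
          rcases b with y | ⟨k, hk⟩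
          · by_cases hp : mul x y ∈ H
            · rw [splitMul_ll_pos mul H x y hp (fun hb => hx hb.1)]
              show mul x y ≤ w ↔ y ≤ res x w
              exact hadj x y w
            · rw [splitMul_ll_neg mul H x y (fun hc => hp hc.1)]
              show mul x y < w ↔ y ≤ res x w
              rw [lt_of_mem hp hw]
              exact hadj x y w
          · have hpn : mul x k ∉ H := fun hmem =>
              hx (memH_mul hk (by rw [hcomm k x]; exact hmem))
            rw [splitMul_lr_neg mul H x ⟨k, hk⟩ hpn]
            show mul x k < w ↔ k ≤ res x w
            rw [lt_of_mem hpn hw]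
            exact hadj x k w
      · rw [res_inr_inr ⟨h, hh⟩ w hw]
        rcases b with y | ⟨k, hk⟩
        · by_cases hp : mul h y ∈ H
          · rw [splitMul_rl_pos mul H ⟨h, hh⟩ y hp]
            show mul h y ≤ w ↔ y ≤ res h w
            exact hadj h y w
          · rw [splitMul_rl_neg mul H ⟨h, hh⟩ y hp]
            show mul h y < w ↔ y ≤ res h w
            rw [lt_of_mem hp hw]
            exact hadj h y w
        · rw [splitMul_rr17 mul H ⟨h, hh⟩ ⟨k, hk⟩ (hHmul _ hh _ hk)]
          show mul h k ≤ w ↔ k ≤ res h w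
          exact hadj h k w
  -- ### involution
  have neg_neg : ∀ a, splitNeg res t H hHneg (splitNeg res t H hHneg a) = a := by
    rintro (x | ⟨h, hh⟩)
    · by_cases hx : x ∈ H
      · rw [neg_inl_pos x hx, neg_inr]
        exact congrArg Sum.inl (hinv x)
      · have hn : res x t ∉ H := fun hc => hx (memH_neg hc)
        rw [neg_inl_neg x hx, neg_inl_neg _ hn]
        exact congrArg Sum.inl (hinv x)
    · rw [neg_inr, neg_inl_pos _ (hHneg h hh)]
      exact congrArg Sum.inr (Subtype.ext (hinv h))
  have mul_one_right : ∀ a, splitMul mul H a (Sum.inl t) = a := by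
    intro a; rw [comm]; exact unit a
  have res_tdot : ∀ a, splitRes mul res t H hHneg a (Sum.inr ⟨t, htH⟩)
      = splitNeg res t H hHneg a := by
    intro a
    show splitNeg res t H hHneg
        (splitMul mul H a (splitNeg res t H hHneg (Sum.inr ⟨t, htH⟩))) = _
    rw [neg_inr]
    rw [show res ((⟨t, htH⟩ : {h : X // h ∈ H})).1 t = t from restt]
    rw [mul_one_right]
  have invol : ∀ a, splitRes mul res t H hHneg
      (splitRes mul res t H hHneg a (Sum.inr ⟨t, htH⟩)) (Sum.inr ⟨t, htH⟩) = a := by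
    intro a; rw [res_tdot, res_tdot, neg_neg]
  have idem : splitMul mul H (Sum.inr ⟨t, htH⟩) (Sum.inr ⟨t, htH⟩)
      = (Sum.inr ⟨t, htH⟩ : X ⊕ {h : X // h ∈ H}) := by
    rw [splitMul_rr17 mul H ⟨t, htH⟩ ⟨t, htH⟩ (hHmul _ htH _ htH)]
    exact congrArg Sum.inr (Subtype.ext (hone t))
  refine ⟨comm, assoc, unit, orefl, oantisymm, otrans, osup, oinf, key, invol, idem,
    le_rfl, (fun hc => nomatch hc : (Sum.inr ⟨t, htH⟩ : X ⊕ {h : X // h ∈ H}) ≠ Sum.inl t), ?_⟩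
  rintro (y | ⟨b, hb⟩) h1 h2
  · exact h1
  · exact lt_of_le_of_ne h1 (fun e => h2 (congrArg Sum.inr (Subtype.ext e.symm)))
end

section
/- Let Y be an even involutive FL_e-algebra whose falsum constant f is idempotent (f*f = f). Then the set H = {x ∈ Y : x*f < x} consists of invertible elements: for every x ∈ H, x * (x→t) = t; moreover x→t ∈ H, so H is closed under the operation x ↦ x→t. -/
/-- In an even involutive FL_e-algebra with idempotent falsum, every element of
H = {x : x*f < x} is invertible (x * (x→t) = t), and H is closed under x ↦ x→t. -/
theorem stmt18 {Y : Type*} [Lattice Y] (mul res : Y → Y → Y) (t f : Y)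
    (hcomm : ∀ x y : Y, mul x y = mul y x)
    (hassoc : ∀ x y z : Y, mul (mul x y) z = mul x (mul y z))
    (hone : ∀ x : Y, mul t x = x)
    (hadj : ∀ x y z : Y, mul x y ≤ z ↔ y ≤ res x z)
    (hinv : ∀ x : Y, res (res x f) f = x)
    (heven : f < t ∧ ∀ w : Y, f < w → t ≤ w)
    (hfidem : mul f f = f) :
    ∀ x : Y, mul x f < x → mul x (res x t) = t ∧ mul (res x t) f < res x t := by
  have ext : ∀ a b : Y, (∀ y, y ≤ a ↔ y ≤ b) → a = b := fun a b h =>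
    le_antisymm ((h a).mp le_rfl) ((h b).mpr le_rfl)
  have hcomm3 : ∀ a b y : Y, mul (mul a b) y = mul b (mul a y) := by
    intro a b y; rw [hcomm a b, hassoc]
  have htf : res t f = f := by
    apply le_antisymm
    · have := (hadj t (res t f) f).mpr le_rfl
      rwa [hone] at this
    · exact (hadj t f f).mp (by rw [hone])
  have hff : res f f = t := by
    calc res f f = res (res t f) f := by rw [htf]
      _ = t := hinv t
  have key : ∀ a w : Y, res a w = res (mul a (res w f)) f := by
    intro a w
    apply ext
    intro y
    rw [← hadj, ← hadj, hcomm3, hadj (res w f), hinv]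
  intro x hx
  have hfr : f ≤ res x (mul x f) := (hadj x f (mul x f)).mp le_rfl
  have hnr : ¬ f < res x (mul x f) := by
    intro h
    have ht := heven.2 _ h
    have hxx := (hadj x t (mul x f)).mpr ht
    rw [hcomm, hone] at hxx
    exact absurd hxx (not_le_of_gt hx)
  have hrf : res x (mul x f) = f :=
    ((lt_or_eq_of_le hfr).resolve_left hnr).symm
  have e1 : res x t = res (mul x f) f := by rw [key x t, htf]
  have e2 : mul x (res (mul x f) f) = res (res x (mul x f)) f := by
    conv_rhs => rw [key x (mul x f), hinv]
  have h1 : mul x (res x t) = t := by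
    rw [e1, e2, hrf, hff]
  refine ⟨h1, ?_⟩
  have hle : mul (res x t) f ≤ res x t := by
    rw [hadj]
    refine le_trans heven.1.le ((hadj (res x t) t (res x t)).mp ?_)
    rw [hcomm, hone]
  have hne : mul (res x t) f ≠ res x t := by
    intro h
    have : t = f := by
      calc t = mul x (res x t) := h1.symm
        _ = mul x (mul (res x t) f) := by rw [h]
        _ = mul (mul x (res x t)) f := by rw [hassoc]
        _ = mul t f := by rw [h1]
        _ = f := hone f
    exact heven.1.ne' this
  exact lt_of_le_of_ne hle hne
end

section
/- Let Y be an even involutive FL_e-algebra with idempotent falsum constant f. Then for every m in H = {x : x⋆f < x}, the element m⋆f is the unique element covered by m (i.e. m⋆f = m↓ and there is no z with m⋆f < z < m). -/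
/-- In an even involutive FL_e-algebra with idempotent falsum, for every
m ∈ H = {x : x*f < x}, m*f is the unique element covered by m:
m*f < m and there is no z strictly between them. -/
theorem stmt19 {Y : Type*} [Lattice Y] (mul res : Y → Y → Y) (t f : Y)
    (hcomm : ∀ x y : Y, mul x y = mul y x)
    (hassoc : ∀ x y z : Y, mul (mul x y) z = mul x (mul y z))
    (hone : ∀ x : Y, mul t x = x)
    (hadj : ∀ x y z : Y, mul x y ≤ z ↔ y ≤ res x z)
    (hinv : ∀ x : Y, res (res x f) f = x)
    (heven : f < t ∧ ∀ w : Y, f < w → t ≤ w)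
    (hfidem : mul f f = f) :
    ∀ m : Y, mul m f < m → ∀ z : Y, ¬(mul m f < z ∧ z < m) := by
  intro m hm z ⟨h1, h2⟩
  -- monotonicity of mul in the second argument
  have mono : ∀ x a b : Y, a ≤ b → mul x a ≤ mul x b := fun x a b h =>
    (hadj x a (mul x b)).mpr (h.trans ((hadj x b (mul x b)).mp le_rfl))
  -- monotonicity in the first argument
  have mono1 : ∀ x a b : Y, a ≤ b → mul a x ≤ mul b x := by
    intro x a b h
    rw [hcomm a x, hcomm b x]; exact mono x a b h
  have hzz : mul z (res z f) ≤ f := (hadj z (res z f) f).mpr le_rfl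
  -- m ≰ z, hence mul m (res z f) ≰ f
  have hnot : ¬ mul m (res z f) ≤ f := by
    intro h
    have h3 : res z f ≤ res m f := (hadj m (res z f) f).mp h
    have h4 : mul (res z f) (res (res m f) f) ≤ f :=
      (mono1 (res (res m f) f) (res z f) (res m f) h3).trans
        ((hadj (res m f) (res (res m f) f) f).mpr le_rfl)
    have h5 : res (res m f) f ≤ res (res z f) f := (hadj (res z f) _ f).mp h4
    rw [hinv, hinv] at h5
    exact absurd (le_antisymm h2.le h5) (ne_of_lt h2)
  have hcover : t ≤ f ⊔ mul m (res z f) := by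
    apply heven.2
    refine lt_of_le_of_ne le_sup_left ?_
    intro h
    exact hnot (le_sup_right.trans h.ge)
  have key : mul z (f ⊔ mul m (res z f)) ≤ mul m f := by
    rw [hadj]
    apply sup_le
    · rw [← hadj]
      exact mono1 f z m h2.le
    · rw [← hadj]
      calc mul z (mul m (res z f)) = mul m (mul z (res z f)) := by
            rw [← hassoc, hcomm z m, hassoc]
        _ ≤ mul m f := mono m _ f hzz
  have : z ≤ mul m f := by
    calc z = mul z t := by rw [hcomm]; exact (hone z).symm
      _ ≤ mul z (f ⊔ mul m (res z f)) := mono z t _ hcover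
      _ ≤ mul m f := key
  exact absurd this h1.not_ge
end
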